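/- Let g ≥ 6 and r ≥ 1 be natural numbers, and let a₁, …, a_g be natural numbers with 0 ≤ aᵢ < r for all i. If ∑_{i=1}^{g} cos(2π aᵢ / r) ≤ 1, then ∑_{i=1}^{g} aᵢ > r. -/

import Mathlib

open Real

lemma cos_half_identity (θ : ℝ) : Real.cos θ = 1 - 2 * Real.sin (θ/2)^2 := by
  have h1 : Real.cos (2 * (θ/2)) = Real.cos (θ/2)^2 - Real.sin (θ/2)^2 := Real.cos_two_mul' _
  have h2 := Real.sin_sq_add_cos_sq (θ/2)
  rw [show 2*(θ/2) = θ by ring] at h1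
  linarith

lemma quart_aux (u : ℝ) (h1 : 541/1000 ≤ u) (h2 : u ≤ 1604/1000) :
    (10/13)*u ≤ u^2/2 - u^4/16 + 2083/5000 := by
  nlinarith [mul_nonneg (sub_nonneg.2 h1) (sub_nonneg.2 h2), sq_nonneg (u - 6/5),
    sq_nonneg (u - 1), sq_nonneg (u + 107/100)]

lemma cos_ge_linear (θ : ℝ) (hθ : 0 ≤ θ) : 1 - (10/13) * θ ≤ Real.cos θ := by
  have hid := cos_half_identity θ
  rcases le_or_gt θ (20/13) with h | h
  · have hs : Real.sin (θ/2) ≤ θ/2 := by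
      rcases eq_or_lt_of_le (by linarith : (0:ℝ) ≤ θ/2) with h0 | h0
      · simp [← h0]
      · exact le_of_lt (Real.sin_lt h0)
    have hs0 : 0 ≤ Real.sin (θ/2) :=
      Real.sin_nonneg_of_nonneg_of_le_pi (by linarith)
        (by nlinarith [Real.pi_gt_d2])
    nlinarith
  · rcases le_or_gt θ (13/5) with h' | h'
    · set u := π - θ with hu
      have hpl := Real.pi_gt_d6
      have hpu := Real.pi_lt_d6
      have hul : 541/1000 ≤ u := by simp only [hu]; nlinarith
      have hu1 : u ≤ 1604/1000 := by simp only [hu]; nlinarith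
      have hv : 0 < u/2 := by positivity
      have hv1 : u/2 ≤ 1 := by nlinarith
      have hv2 : (u/2)^2 ≤ 1 := by nlinarith
      have hsin : u/2 - (u/2)^3/4 < Real.sin (u/2) := by
        have := Real.sin_gt_sub_cube hv; nlinarith [pow_pos hv 3]
      have hidu := cos_half_identity u
      have hcu : Real.cos u = - Real.cos θ := by
        rw [hu, Real.cos_pi_sub]
      have hv0 : 0 ≤ u/2 - (u/2)^3/4 := by
        nlinarith [mul_nonneg hv.le (sub_nonneg.2 hv2)]
      have hsq : (u/2 - (u/2)^3/4)^2 ≤ Real.sin (u/2)^2 := by nlinarith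
      have hθu : θ = π - u := by simp only [hu]; ring
      have hkey : 2 * (u/2 - (u/2)^3/4)^2 ≥ 2 - (10/13) * θ := by
        rw [hθu]
        have hq := quart_aux u hul hu1
        nlinarith [sq_nonneg (u^3)]
      nlinarith [hcu, hidu]
    · nlinarith [Real.neg_one_le_cos θ]

theorem sum_eigenexponents_gt_order
    (g r : ℕ) (hg : 6 ≤ g) (hr : 1 ≤ r) (a : Fin g → ℕ) (ha : ∀ i, a i < r)
    (hcos : ∑ i, Real.cos (2 * Real.pi * (a i) / r) ≤ 1) :
    (∑ i, a i) > r := by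
  have hr0 : (0:ℝ) < r := by exact_mod_cast hr
  have key : ∀ i : Fin g, 1 - (10/13) * (2 * π * (a i) / r) ≤ Real.cos (2 * π * (a i) / r) :=
    fun i => cos_ge_linear _ (by positivity)
  have hsum : ∑ i : Fin g, (1 - (10/13) * (2 * π * (a i) / r)) ≤ 1 :=
    le_trans (Finset.sum_le_sum (fun i _ => key i)) hcos
  have hexp : ∑ i : Fin g, (1 - (10/13) * (2 * π * (a i) / r))
      = (g:ℝ) - (20*π/(13*r)) * ∑ i, ((a i : ℕ) : ℝ) := by
    rw [Finset.sum_sub_distrib, Finset.sum_const, Finset.card_univ, Fintype.card_fin,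
      nsmul_eq_mul, mul_one, Finset.mul_sum]
    congr 1
    apply Finset.sum_congr rfl
    intro i _
    field_simp
    ring
  rw [hexp] at hsum
  set S : ℝ := ∑ i, ((a i : ℕ) : ℝ) with hSdef
  have hS0 : 0 ≤ S := by positivity
  have hg6 : (6:ℝ) ≤ (g:ℝ) := by exact_mod_cast hg
  have h5 : (5:ℝ) ≤ 20*π/(13*r) * S := by linarith
  rw [div_mul_eq_mul_div, le_div_iff₀ (by positivity : (0:ℝ) < 13*r)] at h5
  have hlt : (r:ℝ) < S := by nlinarith [Real.pi_lt_d2]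
  have hcast : S = ((∑ i, a i : ℕ) : ℝ) := by
    rw [hSdef]; push_cast; rfl
  rw [hcast] at hlt
  exact_mod_cast hlt
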